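/- Let q⋆ be an optimal k-points NN quantizer for P with codebook c⋆ = {c⋆₁,…,c⋆_k} and set m = min_{i≠j} |c⋆_i − c⋆_j|. Then for every t with 0 < t < m/4 one has P(𝔉(c⋆)ᵗ) ≤ p⋆(2t). -/

import Mathlib

open MeasureTheory Metric Set ENNReal

noncomputable section

variable {E : Type*} [NormedAddCommGroup E] [InnerProductSpace ℝ E] [MeasurableSpace E]

/-- A `k`-points nearest-neighbor quantizer: a Borel-measurable map whose image is a set of
exactly `k` points and which maps every point to a nearest point of its codebook. -/
def IsNNQuantizer (k : ℕ) (q : E → E) : Prop :=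
  Measurable q ∧ (∃ s : Finset E, s.card = k ∧ Set.range q = ↑s) ∧
    ∀ x : E, ∀ c ∈ Set.range q, ‖x - q x‖ ≤ ‖x - c‖

/-- The risk (distortion) of a quantizer with respect to `P`. -/
def risk (P : Measure E) (q : E → E) : ℝ := ∫ x, ‖x - q x‖ ^ 2 ∂P

/-- An optimal `k`-points NN quantizer for `P`. -/
def IsOptimalQuantizer (P : Measure E) (k : ℕ) (q : E → E) : Prop :=
  IsNNQuantizer k q ∧ ∀ q', IsNNQuantizer k q' → risk P q ≤ risk P q'

/-- The absolute margin condition with parameter `l0` (with respect to the optimal quantizer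
`qs`):  (1) the set `A(l0)` has full `P`-measure; (2) for every random variable `Y`
(encoded by a coupling `π` of the law `P` of `X` and the law of `Y`) with
`E|X - Y|² ≤ l0² E|X - qs X|²`, the map `q ↦ E|Y - q Y|²` over `k`-points NN quantizers has a
unique minimizer (uniqueness of its codebook). -/
def AbsoluteMargin (P : Measure E) (k : ℕ) (qs : E → E) (l0 : ℝ) : Prop :=
  P {x | qs (x + l0 • (x - qs x)) = qs x} = 1 ∧
  ∀ π : Measure (E × E), IsProbabilityMeasure π → π.map Prod.fst = P →
    (∫ p, ‖p.1 - p.2‖ ^ 2 ∂π) ≤ l0 ^ 2 * ∫ x, ‖x - qs x‖ ^ 2 ∂P →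
    ∃ q0, IsNNQuantizer k q0 ∧
      (∀ q', IsNNQuantizer k q' → risk (π.map Prod.snd) q0 ≤ risk (π.map Prod.snd) q') ∧
      ∀ q', IsNNQuantizer k q' →
        (∀ q'', IsNNQuantizer k q'' → risk (π.map Prod.snd) q' ≤ risk (π.map Prod.snd) q'') →
        Set.range q' = Set.range q0

/-- Voronoi cell of the `j`-th point of the codebook `c`. -/
def Vcell (k : ℕ) (c : Fin k → E) (j : Fin k) : Set E := {x | ∀ l, ‖x - c j‖ ≤ ‖x - c l‖}

/-- The frontier of the Voronoi diagram generated by `c`. -/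
def VorFrontier (k : ℕ) (c : Fin k → E) : Set E :=
  ⋃ (i) (j) (_ : i ≠ j), Vcell k c i ∩ Vcell k c j

/-- `F₁` between two codebooks: min over permutations of the max distance of matched centers. -/
def F1 (k : ℕ) (c c' : Fin k → E) : ℝ :=
  ⨅ σ : Equiv.Perm (Fin k), ⨆ j, ‖c j - c' (σ j)‖

/-- `F₂` between two codebooks: the minimal `P`-mass of misclassified points. -/
def F2 (P : Measure E) (k : ℕ) (c c' : Fin k → E) : ℝ :=
  ⨅ σ : Equiv.Perm (Fin k), (P (⋃ j, Vcell k c j ∩ Vcell k c' (σ j))ᶜ).toReal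

/-- `max_{i ≠ j} ‖c i - c j‖`. -/
def maxDist (k : ℕ) (c : Fin k → E) : ℝ :=
  ⨆ p : {p : Fin k × Fin k // p.1 ≠ p.2}, ‖c p.1.1 - c p.1.2‖

/-- `min_{i ≠ j} ‖c i - c j‖`. -/
def minDist (k : ℕ) (c : Fin k → E) : ℝ :=
  ⨅ p : {p : Fin k × Fin k // p.1 ≠ p.2}, ‖c p.1.1 - c p.1.2‖

/-- The function `p⋆(t)` of Definition `def:pstar`, for the optimal codebook `cs` of the
optimal quantizer `qs`. -/
def pstar (P : Measure E) (k : ℕ) (cs : Fin k → E) (qs : E → E) (t : ℝ) : ℝ :=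
  (P (⋃ i, {x | minDist k cs * infDist x (frontier (Vcell k cs i)) ≤
      2 * ‖x - qs x‖ * t + 2 * t ^ 2})).toReal

/-- `F₁` between two quantizers, defined through enumerations of their codebooks. -/
def F1Q (k : ℕ) (q q' : E → E) : ℝ :=
  sInf {r | ∃ c c' : Fin k → E, Set.range c = Set.range q ∧ Set.range c' = Set.range q' ∧
    r = ⨆ j, ‖c j - c' j‖}

lemma vcell_closed (k : ℕ) (cs : Fin k → E) (i : Fin k) : IsClosed (Vcell k cs i) := by
  have : Vcell k cs i = ⋂ l, {x : E | ‖x - cs i‖ ≤ ‖x - cs l‖} := by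
    ext x; simp [Vcell]
  rw [this]
  exact isClosed_iInter fun l =>
    isClosed_le ((continuous_id.sub continuous_const).norm)
      ((continuous_id.sub continuous_const).norm)

lemma mem_frontier_vcell {k : ℕ} (cs : Fin k → E) {i j : Fin k} (hcij : cs i ≠ cs j)
    {y : E} (hyi : y ∈ Vcell k cs i) (hyj : y ∈ Vcell k cs j) :
    y ∈ frontier (Vcell k cs i) := by
  refine ⟨subset_closure hyi, ?_⟩
  intro hint
  rw [mem_interior_iff_mem_nhds, Metric.mem_nhds_iff] at hint
  obtain ⟨ε, hε, hball⟩ := hint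
  set w := cs j - cs i with hw_def
  have hw : 0 < ‖w‖ := by
    rw [norm_pos_iff]
    intro h
    exact hcij (by rw [sub_eq_zero] at h; exact h.symm)
  set s := ε / (2 * ‖w‖) with hs_def
  have hs : 0 < s := by positivity
  set z := y + s • w with hz_def
  have hzball : z ∈ Metric.ball y ε := by
    rw [Metric.mem_ball, dist_eq_norm]
    have : z - y = s • w := by rw [hz_def]; abel
    rw [this, norm_smul, Real.norm_eq_abs, abs_of_pos hs, hs_def]
    have hh : ε / (2 * ‖w‖) * ‖w‖ = ε / 2 := by field_simp
    rw [hh]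
    linarith
  have hzV : z ∈ Vcell k cs i := hball hzball
  have hle : ‖z - cs i‖ ≤ ‖z - cs j‖ := hzV j
  have heq : ‖y - cs i‖ = ‖y - cs j‖ := le_antisymm (hyi j) (hyj i)
  have e1 : z - cs i = (y - cs i) + s • w := by rw [hz_def]; abel
  have e2 : z - cs j = (y - cs j) + s • w := by rw [hz_def]; abel
  have q1 : ‖z - cs i‖ ^ 2 =
      ‖y - cs i‖ ^ 2 + 2 * (s * inner ℝ (y - cs i) w) + ‖s • w‖ ^ 2 := by
    rw [e1, norm_add_sq_real, real_inner_smul_right]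
  have q2 : ‖z - cs j‖ ^ 2 =
      ‖y - cs j‖ ^ 2 + 2 * (s * inner ℝ (y - cs j) w) + ‖s • w‖ ^ 2 := by
    rw [e2, norm_add_sq_real, real_inner_smul_right]
  have hdiff : (inner ℝ (y - cs i) w : ℝ) - inner ℝ (y - cs j) w = ‖w‖ ^ 2 := by
    rw [← inner_sub_left]
    have : (y - cs i) - (y - cs j) = w := by rw [hw_def]; abel
    rw [this, real_inner_self_eq_norm_sq]
  have hsq : ‖z - cs i‖ ^ 2 ≤ ‖z - cs j‖ ^ 2 := by
    have := norm_nonneg (z - cs i)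
    nlinarith
  have h5 : s * (inner ℝ (y - cs i) w : ℝ) - s * inner ℝ (y - cs j) w = s * ‖w‖ ^ 2 := by
    rw [← mul_sub, hdiff]
  have h6 : 0 < s * ‖w‖ ^ 2 := by positivity
  have heq2 : ‖y - cs i‖ ^ 2 = ‖y - cs j‖ ^ 2 := by rw [heq]
  linarith [q1, q2, hsq, heq2, h5, h6]

lemma vorfrontier_nonempty {k : ℕ} (cs : Fin k → E) (hk2 : 2 ≤ k)
    (hinj : Function.Injective cs) : (VorFrontier k cs).Nonempty := by
  by_contra h
  rw [Set.not_nonempty_iff_eq_empty] at h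
  have hdisj : ∀ i j : Fin k, i ≠ j → Vcell k cs i ∩ Vcell k cs j = ∅ := by
    intro i j hij
    rw [Set.eq_empty_iff_forall_notMem]
    intro x hx
    have : x ∈ VorFrontier k cs := by
      rw [VorFrontier]
      exact Set.mem_iUnion.mpr ⟨i, Set.mem_iUnion.mpr ⟨j, Set.mem_iUnion.mpr ⟨hij, hx⟩⟩⟩
    rw [h] at this
    exact this
  haveI : Nonempty (Fin k) := ⟨⟨0, by omega⟩⟩
  have hcover : ∀ x : E, ∃ i, x ∈ Vcell k cs i := by
    intro x
    obtain ⟨i, hi⟩ := Finite.exists_min (fun l => ‖x - cs l‖)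
    exact ⟨i, hi⟩
  set i0 : Fin k := ⟨0, by omega⟩
  set i1 : Fin k := ⟨1, by omega⟩
  have hne01 : i0 ≠ i1 := by
    intro hco
    have : (0 : ℕ) = 1 := congrArg Fin.val hco
    omega
  have hcl : IsClosed (Vcell k cs i0) := vcell_closed k cs i0
  have hcompl : (Vcell k cs i0)ᶜ = ⋃ (l : Fin k) (_ : l ≠ i0), Vcell k cs l := by
    ext x
    simp only [Set.mem_compl_iff, Set.mem_iUnion]
    constructor
    · intro hx
      obtain ⟨l, hl⟩ := hcover x
      have hl0 : l ≠ i0 := by rintro rfl; exact hx hl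
      exact ⟨l, hl0, hl⟩
    · rintro ⟨l, hl0, hl⟩ hx0
      have : x ∈ Vcell k cs l ∩ Vcell k cs i0 := ⟨hl, hx0⟩
      rw [hdisj l i0 hl0] at this
      exact this
  have hopen : IsOpen (Vcell k cs i0) := by
    rw [← isClosed_compl_iff, hcompl]
    exact isClosed_iUnion_of_finite fun l =>
      isClosed_iUnion_of_finite fun _ => vcell_closed k cs l
  haveI : PreconnectedSpace E :=
    ⟨(convex_univ : Convex ℝ (Set.univ : Set E)).isPreconnected⟩
  rcases isClopen_iff.mp ⟨hcl, hopen⟩ with h0 | h0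
  · have : cs i0 ∈ Vcell k cs i0 := by
      intro l; simp [sub_self]
    rw [h0] at this
    exact this
  · have : cs i1 ∈ Vcell k cs i0 := by rw [h0]; trivial
    have h1 := this i1
    simp only [sub_self, norm_zero] at h1
    have : cs i1 = cs i0 := by
      rw [← sub_eq_zero, ← norm_le_zero_iff]
      exact h1
    exact hne01 (hinj this.symm)

/-- `p(t) ≤ p⋆(2t)` for `0 < t < m/4` (Subsection `sub:comp`). -/
theorem stmt10 [BorelSpace E] [CompleteSpace E] [SecondCountableTopology E]
    (P : Measure E) [IsProbabilityMeasure P] (k : ℕ) (hk : 1 ≤ k)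
    (hmom : Integrable (fun x => ‖x‖ ^ 2) P)
    (hsupp : ∀ s : Finset E, s.card ≤ k → P (↑s : Set E) < 1)
    (qs : E → E) (cs : Fin k → E)
    (hcs_inj : Function.Injective cs) (hcs_range : Set.range qs = Set.range cs)
    (hqs : IsOptimalQuantizer P k qs)
    (t : ℝ) (ht : 0 < t) (htm : t < minDist k cs / 4) :
    (P {x | infDist x (VorFrontier k cs) ≤ t}).toReal ≤ pstar P k cs qs (2 * t) := by
  classical
  have hm0 : 0 ≤ minDist k cs := Real.iInf_nonneg fun p => norm_nonneg _
  have hk2 : 2 ≤ k := by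
    by_contra hlt
    have hk1 : k = 1 := by omega
    subst hk1
    haveI : IsEmpty {p : Fin 1 × Fin 1 // p.1 ≠ p.2} :=
      ⟨fun p => p.2 (Subsingleton.elim _ _)⟩
    have hmz : minDist 1 cs = 0 := Real.iInf_of_isEmpty _
    rw [hmz] at htm
    linarith
  rw [pstar]
  refine (ENNReal.toReal_le_toReal (measure_ne_top _ _) (measure_ne_top _ _)).mpr
    (measure_mono ?_)
  intro x hx
  simp only [Set.mem_setOf_eq] at hx
  have hFne := vorfrontier_nonempty cs hk2 hcs_inj
  have hlt : infDist x (VorFrontier k cs) < 2 * t := lt_of_le_of_lt hx (by linarith)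
  obtain ⟨y, hyF, hxy⟩ := (Metric.infDist_lt_iff hFne).mp hlt
  rw [VorFrontier] at hyF
  simp only [Set.mem_iUnion] at hyF
  obtain ⟨i, j, hij, hyi, hyj⟩ := hyF
  have hcij : cs i ≠ cs j := fun hcc => hij (hcs_inj hcc)
  have hyfr : y ∈ frontier (Vcell k cs i) := mem_frontier_vcell cs hcij hyi hyj
  have hinf : infDist x (frontier (Vcell k cs i)) ≤ dist x y :=
    infDist_le_dist_of_mem hyfr
  have hm_le : minDist k cs ≤ ‖cs i - cs j‖ := by
    have hb : BddBelow (Set.range fun p : {p : Fin k × Fin k // p.1 ≠ p.2} =>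
        ‖cs p.1.1 - cs p.1.2‖) := ⟨0, by rintro r ⟨p, rfl⟩; exact norm_nonneg _⟩
    have := ciInf_le hb (⟨(i, j), hij⟩ : {p : Fin k × Fin k // p.1 ≠ p.2})
    simpa [minDist] using this
  have htri : ‖cs i - cs j‖ ≤ ‖y - cs i‖ + ‖y - cs j‖ := by
    have : cs i - cs j = -(y - cs i) + (y - cs j) := by abel
    rw [this]
    exact (norm_add_le _ _).trans (by rw [norm_neg])
  have h2 : ‖y - cs i‖ ≤ ‖y - cs j‖ := hyi j
  have h2' : ‖y - cs j‖ ≤ ‖y - cs i‖ := hyj i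
  obtain ⟨l, hl⟩ : ∃ l, cs l = qs x := by
    have hx' : qs x ∈ Set.range qs := ⟨x, rfl⟩
    rw [hcs_range] at hx'
    exact hx'
  have h3 : ‖y - cs i‖ ≤ ‖y - cs l‖ := hyi l
  have h4 : ‖y - cs l‖ ≤ dist x y + ‖x - cs l‖ := by
    rw [dist_eq_norm]
    have : y - cs l = -(x - y) + (x - cs l) := by abel
    rw [this]
    exact (norm_add_le _ _).trans (by rw [norm_neg])
  have hD : ‖x - qs x‖ = ‖x - cs l‖ := by rw [hl]
  refine Set.mem_iUnion.mpr ⟨i, ?_⟩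
  simp only [Set.mem_setOf_eq]
  have hdnn : 0 ≤ dist x y := dist_nonneg
  have hinn : 0 ≤ infDist x (frontier (Vcell k cs i)) := infDist_nonneg
  have hm2 : minDist k cs ≤ 2 * dist x y + 2 * ‖x - qs x‖ := by
    rw [hD]; linarith
  nlinarith [mul_le_mul_of_nonneg_left hinf hm0, mul_le_mul_of_nonneg_left hxy.le hm0,
    mul_le_mul_of_nonneg_right hm2 (by linarith : (0:ℝ) ≤ 2 * t),
    mul_lt_mul_of_pos_left hxy ht]
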